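/- For every integer n ≥ 1, (n+1)^{n−1} = (n!/2^n) · Σ_{T ∈ 𝒯_n} ∏_{v vertex of T} (1 + 1/h_v), where the sum is over all plane binary trees with n vertices (Postnikov's hook length formula). -/

import Mathlib

open Finset Polynomial
open Finset.HasAntidiagonal.antidiagonal (fst_le snd_le)

/-- The product over all vertices `v` of a plane binary tree of `f h_v`, where
`h_v` is the hook length of `v` (the number of vertices of the subtree rooted
at `v`). -/
def hookProd (f : ℕ → ℚ) : BinaryTree Unit → ℚ
  | BinaryTree.nil => 1
  | BinaryTree.node _ l r => f (l.numNodes + r.numNodes + 1) * hookProd f l * hookProd f r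


lemma fd : ∀ (j : ℕ) (P : Polynomial ℚ), P.degree < j →
    ∑ k ∈ Finset.range (j+1), (-1:ℚ)^k * (j.choose k) * P.eval (k:ℚ) = 0 := by
  intro j
  induction j with
  | zero =>
    intro P hP
    have : P = 0 := by
      rw [← Polynomial.degree_eq_bot]
      exact Nat.WithBot.lt_zero_iff.mp (by exact_mod_cast hP)
    simp [this]
  | succ j ih =>
    intro P hP
    set Q : Polynomial ℚ := P - P.comp (X + 1) with hQ
    have hcomp_ne : ∀ (_ : P ≠ 0), P.comp (X + 1) ≠ 0 := by
      intro hP0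
      have h1 : (X + 1 : Polynomial ℚ).natDegree = 1 := by
        simpa using Polynomial.natDegree_X_add_C (1 : ℚ)
      have := Polynomial.leadingCoeff_comp (p := P) (q := X + 1) (by rw [h1]; norm_num)
      intro h
      rw [h, Polynomial.leadingCoeff_zero] at this
      have hlc : (X + 1 : Polynomial ℚ).leadingCoeff = 1 := by
        simpa using Polynomial.leadingCoeff_X_add_C (1 : ℚ)
      rw [hlc, one_pow, mul_one] at this
      exact hP0 (Polynomial.leadingCoeff_eq_zero.mp this.symm)
    have hQdeg : Q.degree < j := by
      by_cases hP0 : P = 0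
      · rw [hQ, hP0]
        simp
      · have h1 : (X + 1 : Polynomial ℚ).natDegree = 1 := by
          simpa using Polynomial.natDegree_X_add_C (1 : ℚ)
        have hdc : (P.comp (X + 1)).degree = P.degree := by
          rw [Polynomial.degree_eq_natDegree (hcomp_ne hP0), Polynomial.degree_eq_natDegree hP0]
          rw [Polynomial.natDegree_comp, h1, mul_one]
        have hlc : (P.comp (X + 1)).leadingCoeff = P.leadingCoeff := by
          have := Polynomial.leadingCoeff_comp (p := P) (q := X + 1) (by rw [h1]; norm_num)
          have hlc1 : (X + 1 : Polynomial ℚ).leadingCoeff = 1 := by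
            simpa using Polynomial.leadingCoeff_X_add_C (1 : ℚ)
          rw [hlc1, one_pow, mul_one] at this
          exact this
        have hlt : Q.degree < P.degree :=
          Polynomial.degree_sub_lt hdc.symm hP0 hlc.symm
        have hle : P.degree ≤ (j : WithBot ℕ) := by
          rw [Polynomial.degree_eq_natDegree hP0] at hP ⊢
          exact_mod_cast Nat.lt_succ_iff.mp (by exact_mod_cast hP)
        exact lt_of_lt_of_le hlt hle
    have heval : ∀ k : ℕ, Q.eval (k:ℚ) = P.eval (k:ℚ) - P.eval ((k:ℚ)+1) := by
      intro k
      simp [hQ, Polynomial.eval_comp]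
    set A : ℚ := ∑ k ∈ Finset.range (j+1), (-1:ℚ)^k * (j.choose k) * P.eval (k:ℚ) with hA
    set B : ℚ := ∑ k ∈ Finset.range (j+1), (-1:ℚ)^k * (j.choose k) * P.eval ((k:ℚ)+1) with hB
    have hC : ∑ k ∈ Finset.range (j+1), (-1:ℚ)^(k+1) * (j.choose (k+1)) * P.eval ((k:ℚ)+1)
        = A - P.eval 0 := by
      have h2 := Finset.sum_range_succ' (fun k => (-1:ℚ)^k * (j.choose k) * P.eval (k:ℚ)) (j+1)
      have h3 : ∑ k ∈ Finset.range (j+2), (-1:ℚ)^k * (j.choose k) * P.eval (k:ℚ) = A := by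
        rw [Finset.sum_range_succ, hA]
        simp [Nat.choose_succ_self]
      rw [h3] at h2
      have h4 : ∀ k ∈ Finset.range (j+1),
          (-1:ℚ)^(k+1) * (j.choose (k+1)) * P.eval (((k+1:ℕ)):ℚ)
          = (-1:ℚ)^(k+1) * (j.choose (k+1)) * P.eval ((k:ℚ)+1) := by
        intro k _; push_cast; ring_nf
      rw [Finset.sum_congr rfl h4] at h2
      have h5 : ((-1:ℚ)^0 * (j.choose 0) * P.eval ((0:ℕ):ℚ)) = P.eval 0 := by simp
      rw [h5] at h2
      linarith [h2]
    have key : ∑ k ∈ Finset.range (j+2), (-1:ℚ)^k * ((j+1).choose k) * P.eval (k:ℚ)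
        = A - B := by
      rw [Finset.sum_range_succ' (fun k => (-1:ℚ)^k * ((j+1).choose k) * P.eval (k:ℚ)) (j+1)]
      have hsplit : ∀ k ∈ Finset.range (j+1),
          (-1:ℚ)^(k+1) * ((j+1).choose (k+1)) * P.eval (((k+1:ℕ)):ℚ)
          = -((-1:ℚ)^k * (j.choose k) * P.eval ((k:ℚ)+1))
            + (-1:ℚ)^(k+1) * (j.choose (k+1)) * P.eval ((k:ℚ)+1) := by
        intro k _
        rw [Nat.choose_succ_succ]
        push_cast
        ring
      rw [Finset.sum_congr rfl hsplit, Finset.sum_add_distrib, hC]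
      have h6 : ∑ k ∈ Finset.range (j+1), -((-1:ℚ)^k * (j.choose k) * P.eval ((k:ℚ)+1)) = -B := by
        rw [hB, ← Finset.sum_neg_distrib]
      rw [h6]
      simp
      ring
    rw [key, hA, hB, ← Finset.sum_sub_distrib]
    have : ∀ k ∈ Finset.range (j+1),
        (-1:ℚ)^k * (j.choose k) * P.eval (k:ℚ) - (-1:ℚ)^k * (j.choose k) * P.eval ((k:ℚ)+1)
        = (-1:ℚ)^k * (j.choose k) * Q.eval (k:ℚ) := by
      intro k _
      rw [heval]
      ring
    rw [Finset.sum_congr rfl this]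
    exact ih Q hQdeg


lemma tri_aux (m : ℕ) (f : ℕ → ℕ → ℚ) :
    ∑ k ∈ range (m+1), ∑ i ∈ range (m-k+1), f k i
      = ∑ i ∈ range (m+1), ∑ k ∈ range (m-i+1), f k i := by
  have ext1 : ∀ (g : ℕ → ℕ → ℚ) (k : ℕ), k ≤ m →
      ∑ i ∈ range (m-k+1), g k i = ∑ i ∈ range (m+1), if k + i ≤ m then g k i else 0 := by
    intro g k hk
    rw [eq_comm]
    rw [← Finset.sum_subset (Finset.range_subset_range.mpr (by omega : m-k+1 ≤ m+1))]
    · apply Finset.sum_congr rfl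
      intro i hi
      rw [if_pos (by simp at hi; omega)]
    · intro i _ hi
      rw [if_neg (by simp at hi; omega)]
  calc ∑ k ∈ range (m+1), ∑ i ∈ range (m-k+1), f k i
      = ∑ k ∈ range (m+1), ∑ i ∈ range (m+1), if k + i ≤ m then f k i else 0 := by
        apply Finset.sum_congr rfl; intro k hk
        exact ext1 f k (by simp at hk; omega)
    _ = ∑ i ∈ range (m+1), ∑ k ∈ range (m+1), if k + i ≤ m then f k i else 0 :=
        Finset.sum_comm
    _ = ∑ i ∈ range (m+1), ∑ k ∈ range (m-i+1), f k i := by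
        apply Finset.sum_congr rfl; intro i hi
        rw [eq_comm]
        have := ext1 (fun i k => f k i) i (by simp at hi; omega)
        simpa [add_comm] using this.symm ▸ rfl

lemma tri (m : ℕ) (f : ℕ → ℕ → ℚ) :
    ∑ k ∈ range (m+1), ∑ i ∈ range (m-k+1), f k i
      = ∑ j ∈ range (m+1), ∑ k ∈ range (j+1), f k (m-j) := by
  rw [tri_aux]
  rw [← Finset.sum_range_reflect]
  apply Finset.sum_congr rfl
  intro j hj
  simp only [Nat.add_sub_cancel]
  have h1 : m - (m - j) = j := by simp at hj; omega
  rw [h1]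

lemma abel1 (m : ℕ) :
    ∑ k ∈ range (m+1), (m.choose k : ℚ) * ((k:ℚ)+1)^(k-1) * ((m+1-k : ℕ) : ℚ)^(m-k)
      = ((m:ℚ)+2)^m := by
  have hcast : ∀ k ∈ range (m+1), ((m+1-k : ℕ) : ℚ) = ((m:ℚ)+2) - ((k:ℚ)+1) := by
    intro k hk
    simp only [mem_range] at hk
    have : k ≤ m + 1 := by omega
    push_cast [this]
    ring
  have step1 : ∑ k ∈ range (m+1), (m.choose k : ℚ) * ((k:ℚ)+1)^(k-1) * ((m+1-k : ℕ) : ℚ)^(m-k)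
      = ∑ k ∈ range (m+1), ∑ i ∈ range (m-k+1),
          (m.choose k : ℚ) * ((k:ℚ)+1)^(k-1) *
            ((-1:ℚ)^(i+(m-k)) * ((m:ℚ)+2)^i * ((k:ℚ)+1)^(m-k-i) * ((m-k).choose i)) := by
    apply Finset.sum_congr rfl
    intro k hk
    rw [hcast k hk, sub_pow, Finset.mul_sum]
  rw [step1, tri]
  have step2 : ∀ j ∈ range (m+1),
      (∑ k ∈ range (j+1), (m.choose k : ℚ) * ((k:ℚ)+1)^(k-1) *
          ((-1:ℚ)^((m-j)+(m-k)) * ((m:ℚ)+2)^(m-j) * ((k:ℚ)+1)^(m-k-(m-j)) * ((m-k).choose (m-j))))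
      = (m.choose j : ℚ) * ((m:ℚ)+2)^(m-j) *
          ∑ k ∈ range (j+1), (-1:ℚ)^(j-k) * (j.choose k) * ((k:ℚ)+1)^(j-1) := by
    intro j hj
    simp only [mem_range] at hj
    have hjm : j ≤ m := by omega
    rw [Finset.mul_sum]
    apply Finset.sum_congr rfl
    intro k hk
    simp only [mem_range] at hk
    have hkj : k ≤ j := by omega
    -- sign
    have hsign : (-1:ℚ)^((m-j)+(m-k)) = (-1:ℚ)^(j-k) := by
      have h1 : (m-j)+(m-k) = (j-k) + 2*(m-j) := by omega
      rw [h1, pow_add, pow_mul, neg_one_sq, one_pow, mul_one]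
    -- exponent of (k+1)
    have hexp : m - k - (m-j) = j - k := by omega
    -- choose
    have hch : (m.choose k : ℚ) * ((m-k).choose (m-j) : ℚ)
        = (m.choose j : ℚ) * (j.choose k : ℚ) := by
      have h1 : (m-k).choose (m-j) = (m-k).choose (j-k) := by
        have h2 : m - j = (m-k) - (j-k) := by omega
        rw [h2, Nat.choose_symm (by omega)]
      rw [h1]
      rw [← Nat.cast_mul, ← Nat.cast_mul, ← Nat.choose_mul (n := m) hkj]
    -- powers of k+1
    have hpow : ((k:ℚ)+1)^(k-1) * ((k:ℚ)+1)^(j-k) = ((k:ℚ)+1)^(j-1) := by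
      rcases Nat.eq_zero_or_pos k with hk0 | hk1
      · subst hk0; simp
      · rw [← pow_add]
        congr 1
        omega
    rw [hsign, hexp]
    calc (m.choose k : ℚ) * ((k:ℚ)+1)^(k-1) *
          ((-1:ℚ)^(j-k) * ((m:ℚ)+2)^(m-j) * ((k:ℚ)+1)^(j-k) * ((m-k).choose (m-j)))
        = ((m.choose k : ℚ) * ((m-k).choose (m-j) : ℚ)) * (((k:ℚ)+1)^(k-1) * ((k:ℚ)+1)^(j-k))
            * ((-1:ℚ)^(j-k) * ((m:ℚ)+2)^(m-j)) := by ring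
      _ = ((m.choose j : ℚ) * (j.choose k : ℚ)) * ((k:ℚ)+1)^(j-1)
            * ((-1:ℚ)^(j-k) * ((m:ℚ)+2)^(m-j)) := by rw [hch, hpow]
      _ = (m.choose j : ℚ) * ((m:ℚ)+2)^(m-j) * ((-1:ℚ)^(j-k) * (j.choose k) * ((k:ℚ)+1)^(j-1)) := by
            ring
  rw [Finset.sum_congr rfl step2]
  -- inner sum vanishes for j ≥ 1
  rw [Finset.sum_eq_single 0]
  · simp
  · intro j hj hj0
    simp only [mem_range] at hj
    have hj1 : 1 ≤ j := Nat.one_le_iff_ne_zero.mpr hj0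
    have hinner : ∑ k ∈ range (j+1), (-1:ℚ)^(j-k) * (j.choose k) * ((k:ℚ)+1)^(j-1) = 0 := by
      have hsgn : ∀ k ∈ range (j+1), (-1:ℚ)^(j-k) * (j.choose k) * ((k:ℚ)+1)^(j-1)
          = (-1:ℚ)^j * ((-1:ℚ)^k * (j.choose k) * ((k:ℚ)+1)^(j-1)) := by
        intro k hk
        simp only [mem_range] at hk
        have h1 : (-1:ℚ)^(j-k) = (-1:ℚ)^j * (-1:ℚ)^k := by
          have h2 : (-1:ℚ)^(j-k) * (-1:ℚ)^k = (-1:ℚ)^j := by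
            rw [← pow_add]
            congr 1
            omega
          have h3 : (-1:ℚ)^k * (-1:ℚ)^k = 1 := by
            rw [← pow_add, ← two_mul, pow_mul, neg_one_sq, one_pow]
          calc (-1:ℚ)^(j-k) = (-1:ℚ)^(j-k) * ((-1:ℚ)^k * (-1:ℚ)^k) := by rw [h3, mul_one]
            _ = ((-1:ℚ)^(j-k) * (-1:ℚ)^k) * (-1:ℚ)^k := by ring
            _ = (-1:ℚ)^j * (-1:ℚ)^k := by rw [h2]
        rw [h1]; ring
      rw [Finset.sum_congr rfl hsgn, ← Finset.mul_sum]
      have hP : ∑ k ∈ range (j+1), (-1:ℚ)^k * (j.choose k) * ((k:ℚ)+1)^(j-1) = 0 := by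
        have hd : ((Polynomial.X + 1 : Polynomial ℚ)^(j-1)).degree < (j : WithBot ℕ) := by
          have hX1 : (Polynomial.X + 1 : Polynomial ℚ).degree = 1 := by
            simpa using Polynomial.degree_X_add_C (1 : ℚ)
          rw [Polynomial.degree_pow, hX1]
          rw [show ((j-1) • (1 : WithBot ℕ)) = ((j-1 : ℕ) : WithBot ℕ) by simp]
          exact_mod_cast Nat.sub_lt hj1 one_pos
        have := fd j ((Polynomial.X + 1 : Polynomial ℚ)^(j-1)) hd
        simpa using this
      rw [hP, mul_zero]
    rw [hinner, mul_zero]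
  · intro h
    simp at h



lemma abelD (m : ℕ) (hm : 1 ≤ m) :
    ∑ k ∈ range (m+1), (m.choose k : ℚ) * ((k:ℚ)+1)^(k-1) * ((m+1-k : ℕ) : ℚ)^(m-1-k)
      = 2 * ((m:ℚ)+2)^(m-1) := by
  have hm2 : ((m:ℚ)+2) ≠ 0 := by positivity
  have hmul : ((m:ℚ)+2) *
      (∑ k ∈ range (m+1), (m.choose k : ℚ) * ((k:ℚ)+1)^(k-1) * ((m+1-k : ℕ) : ℚ)^(m-1-k))
      = 2 * ((m:ℚ)+2)^m := by
    rw [Finset.mul_sum]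
    have hsplit : ∀ k ∈ range (m+1),
        ((m:ℚ)+2) * ((m.choose k : ℚ) * ((k:ℚ)+1)^(k-1) * ((m+1-k : ℕ) : ℚ)^(m-1-k))
        = (m.choose k : ℚ) * ((k:ℚ)+1)^k * ((m+1-k : ℕ) : ℚ)^(m-1-k)
          + (m.choose k : ℚ) * ((k:ℚ)+1)^(k-1) * ((m+1-k : ℕ) : ℚ)^(m-k) := by
      intro k hk
      simp only [mem_range] at hk
      have hkm : k ≤ m := by omega
      have hb : ((m+1-k : ℕ) : ℚ) = ((m:ℚ)+2) - ((k:ℚ)+1) := by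
        have : k ≤ m + 1 := by omega
        push_cast [this]; ring
      have h1 : ((k:ℚ)+1) * ((k:ℚ)+1)^(k-1) = ((k:ℚ)+1)^k := by
        rcases Nat.eq_zero_or_pos k with h|h
        · subst h; norm_num
        · rw [← pow_succ']
          congr 1
          omega
      have h2 : ((m+1-k : ℕ) : ℚ) * ((m+1-k : ℕ) : ℚ)^(m-1-k) = ((m+1-k : ℕ) : ℚ)^(m-k) := by
        rcases Nat.lt_or_ge k m with h|h
        · rw [← pow_succ']
          congr 1
          omega
        · have hkm' : k = m := by omega
          subst hkm'
          simp
      have hsum : ((m:ℚ)+2) = ((k:ℚ)+1) + ((m+1-k : ℕ) : ℚ) := by rw [hb]; ring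
      calc ((m:ℚ)+2) * ((m.choose k : ℚ) * ((k:ℚ)+1)^(k-1) * ((m+1-k : ℕ) : ℚ)^(m-1-k))
          = (m.choose k : ℚ) * ((((k:ℚ)+1) * ((k:ℚ)+1)^(k-1)) * ((m+1-k : ℕ) : ℚ)^(m-1-k))
            + (m.choose k : ℚ) * (((k:ℚ)+1)^(k-1) * (((m+1-k : ℕ) : ℚ) * ((m+1-k : ℕ) : ℚ)^(m-1-k))) := by
            rw [hsum]; ring
        _ = _ := by rw [h1, h2]; ring
    rw [Finset.sum_congr rfl hsplit, Finset.sum_add_distrib]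
    have hrefl : ∑ k ∈ range (m+1), (m.choose k : ℚ) * ((k:ℚ)+1)^k * ((m+1-k : ℕ) : ℚ)^(m-1-k)
        = ∑ k ∈ range (m+1), (m.choose k : ℚ) * ((k:ℚ)+1)^(k-1) * ((m+1-k : ℕ) : ℚ)^(m-k) := by
      rw [← Finset.sum_range_reflect]
      apply Finset.sum_congr rfl
      intro k hk
      simp only [mem_range] at hk
      have hkm : k ≤ m := by omega
      have e0 : m + 1 - 1 - k = m - k := by omega
      rw [e0]
      have e1 : m.choose (m-k) = m.choose k := Nat.choose_symm hkm
      have e2 : ((m-k : ℕ):ℚ) + 1 = ((m+1-k : ℕ) : ℚ) := by push_cast [hkm, show k ≤ m+1 by omega]; ring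
      have e3 : (m+1-(m-k)) = k+1 := by omega
      have e4 : m-1-(m-k) = k-1 := by omega
      rw [e1, e2, e3, e4]
      push_cast
      ring
    rw [hrefl, abel1]
    ring
  have hpow : ((m:ℚ)+2)^m = ((m:ℚ)+2) * ((m:ℚ)+2)^(m-1) := by
    rw [← pow_succ']
    congr 1
    omega
  rw [hpow] at hmul
  apply mul_left_cancel₀ hm2
  rw [hmul]
  ring

noncomputable def S (n : ℕ) : ℚ :=
  ∑ T ∈ BinaryTree.treesOfNumNodesEq n, hookProd (fun h => 1 + 1 / (h : ℚ)) T

lemma S_zero : S 0 = 1 := by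
  simp [S, hookProd]

lemma S_succ (n : ℕ) :
    S (n+1) = (1 + 1/((n:ℚ)+1)) * ∑ ij ∈ antidiagonal n, S ij.1 * S ij.2 := by
  rw [S, BinaryTree.treesOfNumNodesEq_succ]
  rw [Finset.sum_biUnion]
  · rw [Finset.mul_sum]
    apply Finset.sum_congr rfl
    rintro ⟨i, j⟩ hij
    rw [Finset.HasAntidiagonal.mem_antidiagonal] at hij
    rw [Finset.sum_map, Finset.sum_product]
    have : ∀ l ∈ BinaryTree.treesOfNumNodesEq i, ∀ r ∈ BinaryTree.treesOfNumNodesEq j,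
        hookProd (fun h => 1 + 1 / (h : ℚ)) (BinaryTree.node () l r)
        = (1 + 1/((n:ℚ)+1)) * (hookProd (fun h => 1 + 1 / (h : ℚ)) l
            * hookProd (fun h => 1 + 1 / (h : ℚ)) r) := by
      intro l hl r hr
      rw [BinaryTree.mem_treesOfNumNodesEq] at hl hr
      show (1 + 1/((l.numNodes + r.numNodes + 1 : ℕ) : ℚ)) * _ * _ = _
      rw [hl, hr, hij]
      push_cast
      ring
    calc ∑ l ∈ BinaryTree.treesOfNumNodesEq i, ∑ r ∈ BinaryTree.treesOfNumNodesEq j,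
          hookProd (fun h => 1 + 1 / (h : ℚ)) (BinaryTree.node () l r)
        = ∑ l ∈ BinaryTree.treesOfNumNodesEq i, ∑ r ∈ BinaryTree.treesOfNumNodesEq j,
            (1 + 1/((n:ℚ)+1)) * (hookProd (fun h => 1 + 1 / (h : ℚ)) l
              * hookProd (fun h => 1 + 1 / (h : ℚ)) r) := by
          apply Finset.sum_congr rfl; intro l hl
          apply Finset.sum_congr rfl; intro r hr
          exact this l hl r hr
      _ = (1 + 1/((n:ℚ)+1)) * (S i * S j) := by
          simp_rw [← Finset.mul_sum]
          congr 1
          rw [S, S, Finset.sum_mul_sum]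
          simp_rw [Finset.mul_sum]
  · simp_rw [Set.PairwiseDisjoint, Set.Pairwise, Finset.disjoint_left]
    rintro ⟨i, j⟩ _ ⟨i', j'⟩ _ h
    intro x hx hx'
    apply h
    simp only [Finset.mem_map, Finset.mem_product, Function.Embedding.coeFn_mk] at hx hx'
    obtain ⟨⟨l, r⟩, ⟨hl, hr⟩, rfl⟩ := hx
    obtain ⟨⟨l', r'⟩, ⟨hl', hr'⟩, heq⟩ := hx'
    rw [BinaryTree.mem_treesOfNumNodesEq] at hl hr hl' hr'
    cases heq
    rw [Prod.mk.injEq]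
    constructor <;> omega

lemma S_closed (n : ℕ) : S n = 2^n * ((n:ℚ)+1)^(n-1) / n.factorial := by
  induction n using Nat.case_strong_induction_on with
  | hz => simp [S_zero]
  | hi n ih =>
    rw [S_succ, Finset.Nat.sum_antidiagonal_eq_sum_range_succ_mk]
    have hterm : ∀ k ∈ range (n+1), S k * S (n-k)
        = (2^n / (n.factorial : ℚ)) *
            ((n.choose k : ℚ) * ((k:ℚ)+1)^(k-1) * ((n+1-k : ℕ) : ℚ)^(n-1-k)) := by
      intro k hk
      simp only [mem_range] at hk
      have hkn : k ≤ n := by omega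
      rw [ih k hkn, ih (n-k) (Nat.sub_le n k)]
      have e2 : ((n-k : ℕ):ℚ) + 1 = ((n+1-k : ℕ) : ℚ) := by
        push_cast [hkn, show k ≤ n+1 by omega]; ring
      have e3 : (n-k) - 1 = n-1-k := by omega
      have e4 : (2:ℚ)^k * (2:ℚ)^(n-k) = (2:ℚ)^n := by
        rw [← pow_add]; congr 1; omega
      have hfac : (n.choose k : ℚ) * (k.factorial : ℚ) * ((n-k).factorial : ℚ)
          = (n.factorial : ℚ) := by
        exact_mod_cast congrArg (Nat.cast : ℕ → ℚ)
          (Nat.choose_mul_factorial_mul_factorial hkn)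
      have hk0 : (k.factorial : ℚ) ≠ 0 := by positivity
      have hnk0 : ((n-k).factorial : ℚ) ≠ 0 := by positivity
      have hn0 : (n.factorial : ℚ) ≠ 0 := by positivity
      rw [e2, e3]
      rw [div_mul_div_comm, div_mul_eq_mul_div, div_eq_div_iff (by positivity) hn0]
      calc 2^k * ((k:ℚ)+1)^(k-1) * (2^(n-k) * ((n+1-k : ℕ) : ℚ)^(n-1-k)) * (n.factorial : ℚ)
          = (2^k * 2^(n-k)) * (((k:ℚ)+1)^(k-1) * ((n+1-k : ℕ) : ℚ)^(n-1-k)) * (n.factorial : ℚ) := by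
            ring
        _ = 2^n * ((n.choose k : ℚ) * ((k:ℚ)+1)^(k-1) * ((n+1-k : ℕ) : ℚ)^(n-1-k)) *
              ((k.factorial : ℚ) * ((n-k).factorial : ℚ)) := by
            rw [e4, ← hfac]; ring
    rw [Finset.sum_congr rfl hterm, ← Finset.mul_sum]
    rcases Nat.eq_zero_or_pos n with hn0 | hn1
    · subst hn0
      norm_num [S_zero]
    · rw [abelD n hn1]
      have hpow : ((n:ℚ)+2)^n = ((n:ℚ)+2) * ((n:ℚ)+2)^(n-1) := by
        rw [← pow_succ']; congr 1; omega
      have hfs : ((n+1).factorial : ℚ) = ((n:ℚ)+1) * (n.factorial : ℚ) := by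
        rw [Nat.factorial_succ]; push_cast; ring
      have hn0' : (n.factorial : ℚ) ≠ 0 := by positivity
      have e5 : (n + 1 : ℕ) - 1 = n := by omega
      rw [e5, hfs]
      push_cast
      rw [show ((n:ℚ)+1+1) = ((n:ℚ)+2) by ring, hpow]
      field_simp
      ring

/-- Postnikov's hook length formula:
`(n+1)^(n-1) = (n!/2^n) · Σ_{T ∈ 𝒯_n} ∏_{v ∈ T} (1 + 1/h_v)`,
the sum being over all plane binary trees with `n` vertices. -/
theorem stmt7 (n : ℕ) (hn : 1 ≤ n) :
    ((n : ℚ) + 1) ^ (n - 1)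
      = (n.factorial : ℚ) / 2 ^ n *
          ∑ T ∈ BinaryTree.treesOfNumNodesEq n, hookProd (fun h => 1 + 1 / (h : ℚ)) T := by
  have hS : ∑ T ∈ BinaryTree.treesOfNumNodesEq n, hookProd (fun h => 1 + 1 / (h : ℚ)) T = S n := rfl
  rw [hS, S_closed n]
  have h1 : (n.factorial : ℚ) ≠ 0 := by positivity
  have h2 : (2:ℚ)^n ≠ 0 := by positivity
  field_simp
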